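/- Let M be an R-module, U a minimal complete injective resolution of M, and V any other complete injective resolution of M. Then U is isomorphic to a direct summand of V, with complementary summand a contractible complex. -/

import Mathlib

open CategoryTheory CategoryTheory.Limits

universe u

variable (R : Type u) [CommRing R]

/-- The `a`-torsion submodule `Γ_a(M) = {x ∈ M | aⁿ x = 0 for some n}`. -/
def aTorsion (a : Ideal R) (M : Type u) [AddCommGroup M] [Module R M] : Submodule R M where
  carrier := {x | ∃ n : ℕ, ∀ r ∈ a ^ n, r • x = 0}
  zero_mem' := ⟨0, fun r _ => smul_zero r⟩
  add_mem' := by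
    intro x y hx hy
    obtain ⟨n, hn⟩ := hx
    obtain ⟨m, hm⟩ := hy
    exact ⟨n + m, fun r hr => by
      rw [smul_add, hn r (Ideal.pow_le_pow_right (Nat.le_add_right n m) hr),
        hm r (Ideal.pow_le_pow_right (Nat.le_add_left m n) hr), add_zero]⟩
  smul_mem' := by
    intro c x hx
    obtain ⟨n, hn⟩ := hx
    exact ⟨n, fun r hr => by rw [smul_comm, hn r hr, smul_zero]⟩

/-- Functoriality of the `a`-torsion submodule. -/
def aTorsionMap (a : Ideal R) {M N : Type u} [AddCommGroup M] [Module R M]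
    [AddCommGroup N] [Module R N] (f : M →ₗ[R] N) :
    aTorsion R a M →ₗ[R] aTorsion R a N :=
  f.restrict (p := aTorsion R a M) (q := aTorsion R a N) (fun x hx => by
    obtain ⟨n, hn⟩ := hx
    exact ⟨n, fun r hr => by rw [← map_smul, hn r hr, map_zero]⟩)

/-- The `a`-torsion functor `Γ_a : Mod R → Mod R`. -/
def torsionFunctor (a : Ideal R) : ModuleCat.{u} R ⥤ ModuleCat.{u} R where
  obj M := ModuleCat.of R (aTorsion R a M)
  map f := ModuleCat.ofHom (aTorsionMap R a f.hom)
  map_id := by intros; rfl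
  map_comp := by intros; rfl

instance (a : Ideal R) : (torsionFunctor R a).Additive where
  map_add := by intros; ext x; rfl

/-- The `a`-torsion functor applied degreewise to a cochain complex. -/
def torsionCpx (a : Ideal R) (U : CochainComplex (ModuleCat.{u} R) ℤ) :
    CochainComplex (ModuleCat.{u} R) ℤ :=
  ((torsionFunctor R a).mapHomologicalComplex (ComplexShape.up ℤ)).obj U


/-- A totally acyclic complex of injective modules. -/
structure IsTotallyAcyclicInjCpx (U : CochainComplex (ModuleCat.{u} R) ℤ) : Prop where
  inj : ∀ i : ℤ, Injective (U.X i)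
  acyclic : ∀ i : ℤ, U.ExactAt i
  hom_acyclic : ∀ (J : ModuleCat.{u} R), Injective J → ∀ (i : ℤ) (g : J ⟶ U.X i),
    g ≫ U.d i (i + 1) = 0 → ∃ h : J ⟶ U.X (i - 1), h ≫ U.d (i - 1) i = g

/-- `ι : M ⟶ I.X 0` is an injective resolution of `M` (with `I` a ℤ-indexed cochain
complex vanishing in negative degrees). -/
structure IsInjRes (M : ModuleCat.{u} R) (I : CochainComplex (ModuleCat.{u} R) ℤ)
    (ι : M ⟶ I.X 0) : Prop where
  inj : ∀ i : ℤ, Injective (I.X i)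
  zero_neg : ∀ i < (0 : ℤ), IsZero (I.X i)
  mono : Function.Injective ι
  exact_zero : LinearMap.range ι.hom = LinearMap.ker (I.d 0 1).hom
  exact_pos : ∀ i > (0 : ℤ), I.ExactAt i

/-- A complete injective resolution of `M`. -/
structure IsCompleteInjRes (M : ModuleCat.{u} R) (I U : CochainComplex (ModuleCat.{u} R) ℤ)
    (ι : M ⟶ I.X 0) (ν : I ⟶ U) : Prop where
  res : IsInjRes R M I ι
  totAcyclic : IsTotallyAcyclicInjCpx R U
  iso_ge : ∃ n : ℤ, ∀ i ≥ n, IsIso (ν.f i)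

/-- A complex is minimal if every self homotopy equivalence is an isomorphism. -/
def IsMinimalCpx (C : CochainComplex (ModuleCat.{u} R) ℤ) : Prop :=
  ∀ e : HomotopyEquiv C C, IsIso e.hom

/-- The data of a minimal complete injective resolution of `M`. -/
structure MinCIR (M : ModuleCat.{u} R) where
  I : CochainComplex (ModuleCat.{u} R) ℤ
  U : CochainComplex (ModuleCat.{u} R) ℤ
  ι : M ⟶ I.X 0
  ν : I ⟶ U
  complete : IsCompleteInjRes R M I U ι ν
  minI : IsMinimalCpx R I
  minU : IsMinimalCpx R U

/-- The stable local cohomology module `Γ^stab_a(M) = Z⁰(Γ_a(U))` computed from a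
totally acyclic complex `U` (the complete injective resolution of `M`). -/
def stabLC (a : Ideal R) (U : CochainComplex (ModuleCat.{u} R) ℤ) : ModuleCat.{u} R :=
  ModuleCat.of R (LinearMap.ker ((torsionCpx R a U).d 0 1).hom)

/-- A Gorenstein injective module: a cycle of a totally acyclic complex of injectives. -/
def GorensteinInjective (G : ModuleCat.{u} R) : Prop :=
  ∃ U : CochainComplex (ModuleCat.{u} R) ℤ, IsTotallyAcyclicInjCpx R U ∧
    Nonempty (G ≃ₗ[R] LinearMap.ker (U.d 0 1).hom)

/-- Isomorphism in the stable category of Gorenstein injective modules: `X ⊕ J₁ ≅ Y ⊕ J₂`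
for some injective modules `J₁`, `J₂`. -/
def StablyIsomorphic (X Y : ModuleCat.{u} R) : Prop :=
  ∃ J₁ J₂ : ModuleCat.{u} R, Injective J₁ ∧ Injective J₂ ∧
    Nonempty ((X × J₁) ≃ₗ[R] (Y × J₂))

/-- `M` has injective dimension at most `n`. -/
def InjDimLE (M : ModuleCat.{u} R) (n : ℕ) : Prop :=
  ∃ (I : CochainComplex (ModuleCat.{u} R) ℤ) (ι : M ⟶ I.X 0),
    IsInjRes R M I ι ∧ ∀ i : ℤ, i > (n : ℤ) → IsZero (I.X i)

/-- `M` has finite injective dimension. -/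
def FiniteInjDim (M : ModuleCat.{u} R) : Prop := ∃ n : ℕ, InjDimLE R M n

/-- A Gorenstein ring: commutative Noetherian and every localization at a prime has finite
self-injective dimension. -/
def IsGorensteinRing : Prop :=
  IsNoetherianRing R ∧ ∀ (p : Ideal R) (hp : p.IsPrime),
    haveI := hp
    FiniteInjDim (Localization.AtPrime p)
      (ModuleCat.of (Localization.AtPrime p) (Localization.AtPrime p))

/-- A complex is contractible if its identity is null-homotopic. -/
def ContractibleCpx (C : CochainComplex (ModuleCat.{u} R) ℤ) : Prop :=
  Nonempty (Homotopy (𝟙 C) 0)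

namespace MCIRAux
open HomologicalComplex

variable {R}

lemma capp {A B C : ModuleCat.{u} R} (f : A ⟶ B) (g : B ⟶ C) (x : A) : (f ≫ g) x = g (f x) := rfl

lemma ext_fact {A B C : ModuleCat.{u} R} (hC : Injective C) (d : A ⟶ B) (u : A ⟶ C)
    (h : ∀ a, d a = 0 → u a = 0) : ∃ q : B ⟶ C, d ≫ q = u := by
  haveI := hC
  let dl : A →ₗ[R] B := d.hom
  let w0 : (A ⧸ LinearMap.ker dl) →ₗ[R] C :=
    (LinearMap.ker dl).liftQ u.hom (fun a ha => h a (by simpa [LinearMap.mem_ker] using ha))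
  let w : ModuleCat.of R (LinearMap.range dl) ⟶ C :=
    ModuleCat.ofHom (w0 ∘ₗ (dl.quotKerEquivRange.symm.toLinearMap))
  let m : ModuleCat.of R (LinearMap.range dl) ⟶ B := ModuleCat.ofHom (LinearMap.range dl).subtype
  haveI : Mono m := (ModuleCat.mono_iff_injective m).2 (Submodule.injective_subtype _)
  refine ⟨Injective.factorThru w m, ?_⟩
  ext a
  have h0 : (d ≫ Injective.factorThru w m) a
      = (m ≫ Injective.factorThru w m) ⟨d a, LinearMap.mem_range_self dl a⟩ := rfl
  rw [h0, Injective.comp_factorThru]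
  have h1 : (⟨d a, LinearMap.mem_range_self dl a⟩ : LinearMap.range dl)
      = dl.quotKerEquivRange (Submodule.Quotient.mk a) := by
    ext; simp [LinearMap.quotKerEquivRange_apply_mk]; rfl
  show w0 (dl.quotKerEquivRange.symm _) = u a
  rw [h1, LinearEquiv.symm_apply_apply]
  simp [w0, Submodule.liftQ_apply]; rfl

lemma exact_elem {C : CochainComplex (ModuleCat.{u} R) ℤ} {i : ℤ} (h : C.ExactAt i)
    (x : C.X i) (hx : C.d i (i+1) x = 0) : ∃ y : C.X (i-1), C.d (i-1) i y = x := by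
  rw [C.exactAt_iff' (i-1) i (i+1) (by simp) (by simp)] at h
  exact (ShortComplex.moduleCat_exact_iff _).1 h x hx

lemma exact_elem' {C : CochainComplex (ModuleCat.{u} R) ℤ} {i j : ℤ} (hij : i = j + 1)
    (h : C.ExactAt i) (x : C.X i) (hx : C.d i (i+1) x = 0) :
    ∃ y : C.X j, C.d j i y = x := by
  have hj : j = i - 1 := by omega
  subst hj
  exact exact_elem h x hx



/-- The total-acyclicity lifting property, stated cast-free. -/
def HA (V : CochainComplex (ModuleCat.{u} R) ℤ) : Prop :=
  ∀ (J : ModuleCat.{u} R), Injective J → ∀ (i : ℤ) (g : J ⟶ V.X i),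
    g ≫ V.d i (i + 1) = 0 → ∃ h : J ⟶ V.X (i - 1), h ≫ V.d (i - 1) i = g

lemma HA.lift {V : CochainComplex (ModuleCat.{u} R) ℤ} (hV : HA V)
    (J : ModuleCat.{u} R) (hJ : Injective J) (i j : ℤ) (hij : j = i + 1)
    (g : J ⟶ V.X j) (hg : g ≫ V.d j (j+1) = 0) : ∃ v : J ⟶ V.X i, v ≫ V.d i j = g := by
  have hi : i = j - 1 := by omega
  subst hi
  exact hV J hJ j g hg

section mapext
variable (U V : CochainComplex (ModuleCat.{u} R) ℤ)

open Classical in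
noncomputable def mstep (n : ℤ) (k : ℕ) (s : ∀ i : ℤ, U.X i ⟶ V.X i) :
    ∀ i : ℤ, U.X i ⟶ V.X i :=
  if hex : ∃ v : U.X (n-k-1) ⟶ V.X (n-k-1),
      v ≫ V.d (n-k-1) (n-k) = U.d (n-k-1) (n-k) ≫ s (n-k)
    then Function.update s (n-k-1) hex.choose else s

noncomputable def mseq (n : ℤ) (f₀ : ∀ i : ℤ, U.X i ⟶ V.X i) : ℕ → ∀ i : ℤ, U.X i ⟶ V.X i
  | 0 => f₀
  | (k+1) => mstep U V n k (mseq n f₀ k)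

/-- the commuting-square property at an edge -/
def msq (f : ∀ i : ℤ, U.X i ⟶ V.X i) (i j : ℤ) : Prop :=
  f i ≫ V.d i j = U.d i j ≫ f j

lemma mseq_good (n : ℤ) (hV : HA V) (hUinj : ∀ i, Injective (U.X i))
    (f₀ : ∀ i : ℤ, U.X i ⟶ V.X i)
    (hf₀ : ∀ i j : ℤ, j = i + 1 → n ≤ i → msq U V f₀ i j) :
    ∀ (k : ℕ) (i j : ℤ), j = i + 1 → n - k ≤ i → msq U V (mseq U V n f₀ k) i j := by
  intro k
  induction k with
  | zero => intro i j hij hi; exact hf₀ i j hij (by simpa using hi)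
  | succ k ih =>
    intro i j hij hi
    show msq U V (mstep U V n k (mseq U V n f₀ k)) i j
    rw [mstep]
    have hex : ∃ v : U.X (n-k-1) ⟶ V.X (n-k-1),
        v ≫ V.d (n-k-1) (n-k) = U.d (n-k-1) (n-k) ≫ (mseq U V n f₀ k) (n-k) := by
      apply hV.lift (U.X (n-(k:ℤ)-1)) (hUinj _) (n-k-1) (n-k) (by ring)
      have h1 : (mseq U V n f₀ k) (n-k) ≫ V.d (n-k) (n-k+1)
          = U.d (n-k) (n-k+1) ≫ (mseq U V n f₀ k) (n-k+1) :=
        ih (n-k) (n-k+1) rfl (by omega)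
      rw [Category.assoc, h1, ← Category.assoc, HomologicalComplex.d_comp_d, zero_comp]
    rw [dif_pos hex]
    subst hij
    rcases lt_or_eq_of_le hi with hlt | heq
    · have hne : i ≠ n - k - 1 := by push_cast at hlt ⊢; omega
      have hne' : i + 1 ≠ n - k - 1 := by push_cast at hlt ⊢; omega
      unfold msq
      rw [Function.update_of_ne hne, Function.update_of_ne hne']
      exact ih i (i+1) rfl (by push_cast at hlt ⊢; omega)
    · have hi0 : i = n - k - 1 := by push_cast at heq; omega
      subst hi0
      unfold msq
      rw [Function.update_self, Function.update_of_ne (by omega)]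
      have hcs := hex.choose_spec
      have he : (n - (k:ℤ) - 1) + 1 = n - k := by ring
      rw [he]
      exact hcs

lemma mseq_stab (n : ℤ) (f₀ : ∀ i : ℤ, U.X i ⟶ V.X i) (i : ℤ) :
    ∀ (k m : ℕ), (n - i).toNat ≤ k → k ≤ m → mseq U V n f₀ m i = mseq U V n f₀ k i := by
  intro k m hk hm
  induction m with
  | zero =>
    have : k = 0 := by omega
    subst this; rfl
  | succ m ih =>
    rcases Nat.lt_or_ge m k with h | h
    · have : k = m + 1 := by omega
      subst this; rfl
    · have ihm := ih (by omega)
      show mstep U V n m (mseq U V n f₀ m) i = _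
      rw [mstep]
      have hi : i ≠ n - m - 1 := by
        have := Int.self_le_toNat (n - i)
        omega
      split
      · rw [Function.update_of_ne hi]; exact ihm
      · exact ihm

lemma chainmap_extend (n : ℤ) (hV : HA V) (hUinj : ∀ i, Injective (U.X i))
    (f₀ : ∀ i : ℤ, U.X i ⟶ V.X i)
    (hf₀ : ∀ i j : ℤ, j = i + 1 → n ≤ i → msq U V f₀ i j) :
    ∃ f : U ⟶ V, ∀ i : ℤ, n ≤ i → f.f i = f₀ i := by
  refine ⟨⟨fun i => mseq U V n f₀ ((n - i).toNat) i, ?_⟩, ?_⟩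
  · intro i j hij
    rw [ComplexShape.up_Rel] at hij
    subst hij
    show mseq U V n f₀ ((n-i).toNat) i ≫ V.d i (i+1)
        = U.d i (i+1) ≫ mseq U V n f₀ ((n-(i+1)).toNat) (i+1)
    have h2 : mseq U V n f₀ ((n-i).toNat) (i+1) = mseq U V n f₀ ((n-(i+1)).toNat) (i+1) :=
      mseq_stab U V n f₀ (i+1) ((n-(i+1)).toNat) ((n-i).toNat) le_rfl
        (by apply Int.toNat_le_toNat; omega)
    have h3 := mseq_good U V n hV hUinj f₀ hf₀ ((n-i).toNat) i (i+1) rfl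
      (by have := Int.self_le_toNat (n - i); omega)
    unfold msq at h3
    rw [← h2]
    exact h3
  · intro i hi
    show mseq U V n f₀ ((n - i).toNat) i = f₀ i
    have h4 : (n - i).toNat = 0 := by omega
    rw [h4]
    rfl

end mapext

section hext
variable (U V : CochainComplex (ModuleCat.{u} R) ℤ)

/-- homotopy relation at degree `i` -/
def hrel (h : U ⟶ V) (s : ∀ i j : ℤ, U.X i ⟶ V.X j) (i : ℤ) : Prop :=
  h.f i = U.d i (i+1) ≫ s (i+1) i + s i (i-1) ≫ V.d (i-1) i

open Classical in
noncomputable def hstep (h : U ⟶ V) (n : ℤ) (k : ℕ) (s : ∀ i j : ℤ, U.X i ⟶ V.X j) :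
    ∀ i j : ℤ, U.X i ⟶ V.X j :=
  if hex : ∃ v : U.X (n-k-1) ⟶ V.X (n-k-1-1),
      v ≫ V.d (n-k-1-1) (n-k-1) = h.f (n-k-1) - U.d (n-k-1) (n-k) ≫ s (n-k) (n-k-1)
    then Function.update s (n-k-1) (Function.update (s (n-k-1)) (n-k-1-1) hex.choose) else s

noncomputable def hseq (h : U ⟶ V) (n : ℤ) (s₀ : ∀ i j : ℤ, U.X i ⟶ V.X j) :
    ℕ → ∀ i j : ℤ, U.X i ⟶ V.X j
  | 0 => s₀
  | (k+1) => hstep U V h n k (hseq h n s₀ k)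

lemma hseq_good (h : U ⟶ V) (n : ℤ) (hV : HA V) (hUinj : ∀ i, Injective (U.X i))
    (s₀ : ∀ i j : ℤ, U.X i ⟶ V.X j) (hs₀ : ∀ i : ℤ, n ≤ i → hrel U V h s₀ i) :
    ∀ (k : ℕ) (i : ℤ), n - k ≤ i → hrel U V h (hseq U V h n s₀ k) i := by
  intro k
  induction k with
  | zero => intro i hi; exact hs₀ i (by simpa using hi)
  | succ k ih =>
    intro i hi
    show hrel U V h (hstep U V h n k (hseq U V h n s₀ k)) i
    rw [hstep]
    set s := hseq U V h n s₀ k with hs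
    have hex : ∃ v : U.X (n-k-1) ⟶ V.X (n-k-1-1),
        v ≫ V.d (n-k-1-1) (n-k-1) = h.f (n-k-1) - U.d (n-k-1) (n-k) ≫ s (n-k) (n-k-1) := by
      apply hV.lift (U.X (n-(k:ℤ)-1)) (hUinj _) (n-k-1-1) (n-k-1) (by ring)
      have e1 : n-(k:ℤ)-1+1 = n-k := by ring
      rw [e1]
      have hcomm : h.f (n-(k:ℤ)-1) ≫ V.d (n-k-1) (n-k) = U.d (n-k-1) (n-k) ≫ h.f (n-k) :=
        h.comm (n-k-1) (n-k)
      have hr := ih (n-k) (by omega)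
      unfold hrel at hr
      rw [Preadditive.sub_comp, Category.assoc, hcomm, hr, Preadditive.comp_add,
        ← Category.assoc, HomologicalComplex.d_comp_d, zero_comp, zero_add, sub_self]
    rw [dif_pos hex]
    rcases lt_or_eq_of_le hi with hlt | heq
    · have hne : i ≠ n - k - 1 := by push_cast at hlt ⊢; omega
      have hne' : i + 1 ≠ n - k - 1 := by push_cast at hlt ⊢; omega
      unfold hrel
      rw [Function.update_of_ne hne, Function.update_of_ne hne']
      exact ih i (by push_cast at hlt ⊢; omega)
    · have hi0 : i = n - k - 1 := by push_cast at heq; omega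
      subst hi0
      unfold hrel
      rw [Function.update_of_ne (by omega : n - (k:ℤ) - 1 + 1 ≠ n - k - 1),
        Function.update_self, Function.update_self]
      have hcs := hex.choose_spec
      have e4 : n - (k:ℤ) - 1 - 1 = n - k - 1 - 1 := rfl
      have e5 : n - (k:ℤ) - 1 + 1 = n - k := by ring
      rw [e5, hcs]
      abel
lemma hseq_stab (h : U ⟶ V) (n : ℤ) (s₀ : ∀ i j : ℤ, U.X i ⟶ V.X j) (i : ℤ) :
    ∀ (k m : ℕ), (n - i).toNat ≤ k → k ≤ m →
      hseq U V h n s₀ m i = hseq U V h n s₀ k i := by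
  intro k m hk hm
  induction m with
  | zero =>
    have : k = 0 := by omega
    subst this; rfl
  | succ m ih =>
    rcases Nat.lt_or_ge m k with hc | hc
    · have : k = m + 1 := by omega
      subst this; rfl
    · have ihm := ih (by omega)
      show hstep U V h n m (hseq U V h n s₀ m) i = _
      rw [hstep]
      have hi : i ≠ n - m - 1 := by
        have := Int.self_le_toNat (n - i)
        omega
      split
      · rw [Function.update_of_ne hi]; exact ihm
      · exact ihm

open Classical in
lemma homotopy_extend (h : U ⟶ V) (n : ℤ) (hV : HA V) (hUinj : ∀ i, Injective (U.X i))
    (s₀ : ∀ i j : ℤ, U.X i ⟶ V.X j) (hs₀ : ∀ i : ℤ, n ≤ i → hrel U V h s₀ i) :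
    Nonempty (Homotopy h 0) := by
  set S : ∀ i j : ℤ, U.X i ⟶ V.X j := fun i j => hseq U V h n s₀ ((n - i).toNat) i j with hS
  set S' : ∀ i j : ℤ, U.X i ⟶ V.X j := fun i j => if j + 1 = i then S i j else 0 with hS'
  have hrelS : ∀ i : ℤ, hrel U V h S i := by
    intro i
    have hg := hseq_good U V h n hV hUinj s₀ hs₀ ((n - i).toNat) i
      (by have := Int.self_le_toNat (n - i); omega)
    unfold hrel at hg ⊢
    have h2 : hseq U V h n s₀ ((n-i).toNat) (i+1) = hseq U V h n s₀ ((n-(i+1)).toNat) (i+1) :=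
      hseq_stab U V h n s₀ (i+1) ((n-(i+1)).toNat) ((n-i).toNat) le_rfl
        (by apply Int.toNat_le_toNat; omega)
    show h.f i = U.d i (i+1) ≫ hseq U V h n s₀ ((n-(i+1)).toNat) (i+1) i
        + hseq U V h n s₀ ((n-i).toNat) i (i-1) ≫ V.d (i-1) i
    rw [← h2]
    exact hg
  refine ⟨⟨S', ?_, ?_⟩⟩
  · intro i j hni
    rw [ComplexShape.up_Rel] at hni
    exact if_neg hni
  · intro i
    rw [dNext_eq S' (show (ComplexShape.up ℤ).Rel i (i+1) by simp),
      prevD_eq S' (show (ComplexShape.up ℤ).Rel (i-1) i by simp)]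
    have e1 : S' (i+1) i = S (i+1) i := if_pos rfl
    have e2 : S' i (i-1) = S i (i-1) := if_pos (by ring)
    rw [e1, e2]
    have := hrelS i
    unfold hrel at this
    simpa using this

end hext

section comparison
variable {M : ModuleCat.{u} R} (I J : CochainComplex (ModuleCat.{u} R) ℤ)
  (ι : M ⟶ I.X 0) (ι' : M ⟶ J.X 0)

/-- invariant for the comparison construction: kernels map to kernels -/
def cker (s : ∀ i : ℤ, I.X i ⟶ J.X i) (i : ℤ) : Prop :=
  ∀ x : I.X i, I.d i (i+1) x = 0 → J.d i (i+1) (s i x) = 0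

open Classical in
noncomputable def cstep (k : ℕ) (s : ∀ i : ℤ, I.X i ⟶ J.X i) : ∀ i : ℤ, I.X i ⟶ J.X i :=
  if hex : ∃ v : I.X ((k:ℤ)+1) ⟶ J.X ((k:ℤ)+1),
      I.d k (k+1) ≫ v = s k ≫ J.d k (k+1)
    then Function.update s ((k:ℤ)+1) hex.choose else s

open Classical in
noncomputable def cseq (α₀ : I.X 0 ⟶ J.X 0) : ℕ → ∀ i : ℤ, I.X i ⟶ J.X i
  | 0 => fun i => if h : i = (0:ℤ) then eqToHom (by rw [h]) ≫ α₀ ≫ eqToHom (by rw [h]) else 0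
  | (k+1) => cstep I J k (cseq α₀ k)

lemma cseq_zero_zero (α₀ : I.X 0 ⟶ J.X 0) : cseq I J α₀ 0 0 = α₀ := by
  show (if h : (0:ℤ) = (0:ℤ) then eqToHom (by rw [h]) ≫ α₀ ≫ eqToHom (by rw [h]) else 0) = α₀
  rw [dif_pos rfl]
  simp

lemma cseq_good
    (hJinj : ∀ i, CategoryTheory.Injective (J.X i))
    (hIex0 : LinearMap.range ι.hom = LinearMap.ker (I.d 0 1).hom)
    (hJex0 : LinearMap.range ι'.hom = LinearMap.ker (J.d 0 1).hom)
    (hIpos : ∀ i : ℤ, i > 0 → I.ExactAt i)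
    (α₀ : I.X 0 ⟶ J.X 0) (hα₀ : ι ≫ α₀ = ι') :
    ∀ k : ℕ,
      ((∀ i j : ℤ, j = i + 1 → 0 ≤ i → j ≤ (k:ℤ) →
          cseq I J α₀ k i ≫ J.d i j = I.d i j ≫ cseq I J α₀ k j)
        ∧ (∀ i : ℤ, 0 ≤ i → i ≤ (k:ℤ) → cker I J (cseq I J α₀ k) i)) := by
  intro k
  induction k with
  | zero =>
    constructor
    · intro i j hij hi hj; omega
    · intro i hi hik x hx
      have hi0 : i = 0 := by omega
      subst hi0
      rw [cseq_zero_zero]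
      have hx' : x ∈ LinearMap.ker (I.d 0 1).hom := by
        simpa [LinearMap.mem_ker] using (by simpa using hx : I.d 0 (0+1) x = 0)
      rw [← hIex0] at hx'
      obtain ⟨m, hm⟩ := hx'
      have h1 : α₀ x = ι' m := by
        rw [← hm]
        show (ι ≫ α₀) m = ι' m
        rw [hα₀]
      rw [h1]
      have h2 : ι' m ∈ LinearMap.ker (J.d 0 1).hom := by
        rw [← hJex0]; exact ⟨m, rfl⟩
      simpa [LinearMap.mem_ker] using h2
  | succ k ih =>
    obtain ⟨ihS, ihP⟩ := ih
    have hex : ∃ v : I.X ((k:ℤ)+1) ⟶ J.X ((k:ℤ)+1),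
        I.d k (k+1) ≫ v = cseq I J α₀ k k ≫ J.d k (k+1) := by
      apply ext_fact (hJinj _)
      intro a ha
      exact ihP k (by positivity) le_rfl a ha
    have hunf : cseq I J α₀ (k+1) = Function.update (cseq I J α₀ k) ((k:ℤ)+1) hex.choose := by
      show cstep I J k (cseq I J α₀ k) = _
      rw [cstep, dif_pos hex]
    constructor
    · intro i j hij hi hj
      rw [hunf]
      subst hij
      rcases lt_or_eq_of_le hj with hlt | heq
      · have hne : i ≠ (k:ℤ)+1 := by push_cast at hlt; omega
        have hne' : i + 1 ≠ (k:ℤ)+1 := by push_cast at hlt; omega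
        rw [Function.update_of_ne hne, Function.update_of_ne hne']
        exact ihS i (i+1) rfl hi (by push_cast at hlt ⊢; omega)
      · have hik : i = (k:ℤ) := by push_cast at heq; omega
        subst hik
        rw [Function.update_self, Function.update_of_ne (by omega)]
        exact hex.choose_spec.symm
    · intro i hi hik x hx
      rw [hunf]
      rcases lt_or_eq_of_le hik with hlt | heq
      · have hne : i ≠ (k:ℤ)+1 := by push_cast at hlt; omega
        rw [Function.update_of_ne hne]
        exact ihP i hi (by push_cast at hlt ⊢; omega) x hx
      · have hik' : i = (k:ℤ)+1 := by push_cast at heq; omega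
        subst hik'
        rw [Function.update_self]
        obtain ⟨y, hy⟩ := exact_elem' rfl (hIpos ((k:ℤ)+1) (by positivity)) x hx
        have h3 : hex.choose x = J.d k (k+1) (cseq I J α₀ k k y) := by
          rw [← hy, ← capp, hex.choose_spec, capp]
        rw [h3]
        have h4 : ∀ z : J.X (k:ℤ), J.d ((k:ℤ)+1) ((k:ℤ)+1+1) (J.d k (k+1) z) = 0 := by
          intro z
          rw [← capp, HomologicalComplex.d_comp_d]
          rfl
        exact h4 _

lemma cseq_stab (α₀ : I.X 0 ⟶ J.X 0) (i : ℤ) :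
    ∀ (k m : ℕ), i.toNat ≤ k → k ≤ m → cseq I J α₀ m i = cseq I J α₀ k i := by
  intro k m hk hm
  induction m with
  | zero =>
    have : k = 0 := by omega
    subst this; rfl
  | succ m ih =>
    rcases Nat.lt_or_ge m k with hc | hc
    · have : k = m + 1 := by omega
      subst this; rfl
    · have ihm := ih (by omega)
      show cstep I J m (cseq I J α₀ m) i = _
      rw [cstep]
      have hi : i ≠ (m:ℤ)+1 := by
        have h6 : (i.toNat : ℤ) ≤ (m:ℤ) := by exact_mod_cast hc.trans' hk
        have h7 := Int.self_le_toNat i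
        omega
      split
      · rw [Function.update_of_ne hi]; exact ihm
      · exact ihm

lemma comparison
    (hJinj : ∀ i, CategoryTheory.Injective (J.X i))
    (hIzero : ∀ i : ℤ, i < 0 → IsZero (I.X i))
    (hιmono : Function.Injective ι)
    (hIex0 : LinearMap.range ι.hom = LinearMap.ker (I.d 0 1).hom)
    (hJex0 : LinearMap.range ι'.hom = LinearMap.ker (J.d 0 1).hom)
    (hIpos : ∀ i : ℤ, i > 0 → I.ExactAt i) :
    ∃ α : I ⟶ J, ι ≫ α.f 0 = ι' := by
  haveI : Mono ι := (ModuleCat.mono_iff_injective ι).2 hιmono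
  haveI := hJinj 0
  set α₀ : I.X 0 ⟶ J.X 0 := Injective.factorThru ι' ι with hα₀def
  have hα₀ : ι ≫ α₀ = ι' := Injective.comp_factorThru ι' ι
  refine ⟨⟨fun i => cseq I J α₀ (i.toNat) i, ?_⟩, ?_⟩
  · intro i j hij
    rw [ComplexShape.up_Rel] at hij
    subst hij
    rcases lt_or_ge i 0 with hi | hi
    · exact (hIzero i hi).eq_of_src _ _
    · show cseq I J α₀ (i.toNat) i ≫ J.d i (i+1) = I.d i (i+1) ≫ cseq I J α₀ ((i+1).toNat) (i+1)
      have h2 : cseq I J α₀ ((i+1).toNat) i = cseq I J α₀ (i.toNat) i :=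
        cseq_stab I J α₀ i (i.toNat) ((i+1).toNat) le_rfl (by apply Int.toNat_le_toNat; omega)
      rw [← h2]
      exact (cseq_good I J ι ι' hJinj hIex0 hJex0 hIpos α₀ hα₀ ((i+1).toNat)).1 i (i+1) rfl hi
        (by rw [Int.toNat_of_nonneg (by omega)])
  · show ι ≫ cseq I J α₀ ((0:ℤ).toNat) 0 = ι'
    rw [show (0:ℤ).toNat = 0 from rfl, cseq_zero_zero]
    exact hα₀

end comparison

section nullh
variable {M : ModuleCat.{u} R} (I J : CochainComplex (ModuleCat.{u} R) ℤ)
  (ι : M ⟶ I.X 0)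

def nrel (h : I ⟶ J) (s : ∀ i j : ℤ, I.X i ⟶ J.X j) (i : ℤ) : Prop :=
  h.f i = I.d i (i+1) ≫ s (i+1) i + s i (i-1) ≫ J.d (i-1) i

open Classical in
noncomputable def nstep (h : I ⟶ J) (k : ℕ) (s : ∀ i j : ℤ, I.X i ⟶ J.X j) :
    ∀ i j : ℤ, I.X i ⟶ J.X j :=
  if hex : ∃ v : I.X ((k:ℤ)+1) ⟶ J.X (k:ℤ),
      I.d k (k+1) ≫ v = h.f k - s k ((k:ℤ)-1) ≫ J.d ((k:ℤ)-1) k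
    then Function.update s ((k:ℤ)+1) (Function.update (s ((k:ℤ)+1)) (k:ℤ) hex.choose) else s

noncomputable def nseq (h : I ⟶ J) : ℕ → ∀ i j : ℤ, I.X i ⟶ J.X j
  | 0 => fun _ _ => 0
  | (k+1) => nstep I J h k (nseq h k)

lemma nseq_good
    (hJinj : ∀ i, CategoryTheory.Injective (J.X i))
    (hIzero : ∀ i : ℤ, i < 0 → IsZero (I.X i))
    (hIex0 : LinearMap.range ι.hom = LinearMap.ker (I.d 0 1).hom)
    (hIpos : ∀ i : ℤ, i > 0 → I.ExactAt i)
    (h : I ⟶ J) (hh0 : ι ≫ h.f 0 = 0) :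
    ∀ k : ℕ,
      (∀ i j : ℤ, (i ≤ 0 ∨ (k:ℤ) < i) → nseq I J h k i j = 0)
      ∧ (∀ i j : ℤ, j + 1 ≠ i → nseq I J h k i j = 0)
      ∧ (∀ i : ℤ, i < (k:ℤ) → nrel I J h (nseq I J h k) i) := by
  intro k
  induction k with
  | zero =>
    refine ⟨fun _ _ _ => rfl, fun _ _ _ => rfl, fun i hi => ?_⟩
    exact (hIzero i (by simpa using hi)).eq_of_src _ _
  | succ k ih =>
    obtain ⟨ihZ, ihD, ihA⟩ := ih
    have hex : ∃ v : I.X ((k:ℤ)+1) ⟶ J.X (k:ℤ),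
        I.d k (k+1) ≫ v = h.f k - nseq I J h k k ((k:ℤ)-1) ≫ J.d ((k:ℤ)-1) k := by
      apply ext_fact (hJinj _)
      intro a ha
      rcases Nat.eq_zero_or_pos k with hk | hk
      · subst hk
        have hz : nseq I J h 0 ((0:ℕ):ℤ) (((0:ℕ):ℤ)-1) = 0 := rfl
        rw [hz, zero_comp, sub_zero]
        have ha' : I.d 0 1 a = 0 := by simpa using ha
        have hmem : a ∈ LinearMap.ker (I.d 0 1).hom := by simpa [LinearMap.mem_ker] using ha'
        rw [← hIex0] at hmem
        obtain ⟨m, hm⟩ := hmem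
        rw [← hm]
        show (ι ≫ h.f 0) m = 0
        rw [hh0]
        rfl
      · -- k ≥ 1
        have hky : ((k:ℤ)) > 0 := by exact_mod_cast hk
        obtain ⟨y, hy⟩ := exact_elem' (by ring : (k:ℤ) = ((k:ℤ)-1) + 1) (hIpos k hky) a ha
        have hr := ihA ((k:ℤ)-1) (by omega)
        unfold nrel at hr
        rw [show ((k:ℤ)-1)+1 = (k:ℤ) from by ring] at hr
        have hr2 : I.d ((k:ℤ)-1) k ≫ nseq I J h k k ((k:ℤ)-1)
            = h.f ((k:ℤ)-1) - nseq I J h k ((k:ℤ)-1) ((k:ℤ)-1-1) ≫ J.d ((k:ℤ)-1-1) ((k:ℤ)-1) := by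
          rw [hr]; abel
        have key : I.d ((k:ℤ)-1) k ≫ (h.f k - nseq I J h k k ((k:ℤ)-1) ≫ J.d ((k:ℤ)-1) k) = 0 := by
          rw [Preadditive.comp_sub, ← Category.assoc, hr2, Preadditive.sub_comp,
            HomologicalComplex.Hom.comm h ((k:ℤ)-1) k, Category.assoc,
            HomologicalComplex.d_comp_d, comp_zero]
          abel
        have : (h.f k - nseq I J h k k ((k:ℤ)-1) ≫ J.d ((k:ℤ)-1) k) a
            = (I.d ((k:ℤ)-1) k ≫ (h.f k - nseq I J h k k ((k:ℤ)-1) ≫ J.d ((k:ℤ)-1) k)) y := by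
          rw [capp, hy]
        rw [this, key]
        rfl
    have hunf : nseq I J h (k+1)
        = Function.update (nseq I J h k) ((k:ℤ)+1)
            (Function.update (nseq I J h k ((k:ℤ)+1)) (k:ℤ) hex.choose) := by
      show nstep I J h k (nseq I J h k) = _
      rw [nstep, dif_pos hex]
    refine ⟨?_, ?_, ?_⟩
    · intro i j hij
      rw [hunf]
      by_cases hik : i = (k:ℤ)+1
      · exfalso; push_cast at hij; omega
      · rw [Function.update_of_ne hik]
        apply ihZ
        push_cast at hij ⊢; omega
    · intro i j hij
      rw [hunf]
      by_cases hik : i = (k:ℤ)+1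
      · subst hik
        rw [Function.update_self]
        by_cases hjk : j = (k:ℤ)
        · exfalso; omega
        · rw [Function.update_of_ne hjk]
          exact ihD _ _ hij
      · rw [Function.update_of_ne hik]
        exact ihD _ _ hij
    · intro i hi
      rw [hunf]
      rcases lt_or_eq_of_le (by push_cast at hi ⊢; omega : i ≤ (k:ℤ)) with hlt | heq
      · unfold nrel
        rw [Function.update_of_ne (by omega), Function.update_of_ne (by omega)]
        exact ihA i hlt
      · subst heq
        unfold nrel
        rw [Function.update_self, Function.update_self,
          Function.update_of_ne (by omega : (k:ℤ) ≠ (k:ℤ)+1)]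
        rw [hex.choose_spec]
        abel
lemma nseq_stab (h : I ⟶ J) (i : ℤ) :
    ∀ (k m : ℕ), i.toNat ≤ k → k ≤ m → nseq I J h m i = nseq I J h k i := by
  intro k m hk hm
  induction m with
  | zero =>
    have : k = 0 := by omega
    subst this; rfl
  | succ m ih =>
    rcases Nat.lt_or_ge m k with hc | hc
    · have : k = m + 1 := by omega
      subst this; rfl
    · have ihm := ih (by omega)
      show nstep I J h m (nseq I J h m) i = _
      rw [nstep]
      have hi : i ≠ (m:ℤ)+1 := by
        have h6 : (i.toNat : ℤ) ≤ (m:ℤ) := by exact_mod_cast hc.trans' hk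
        have h7 := Int.self_le_toNat i
        omega
      split
      · rw [Function.update_of_ne hi]; exact ihm
      · exact ihm

lemma nullhomotopy
    (hJinj : ∀ i, CategoryTheory.Injective (J.X i))
    (hIzero : ∀ i : ℤ, i < 0 → IsZero (I.X i))
    (hIex0 : LinearMap.range ι.hom = LinearMap.ker (I.d 0 1).hom)
    (hIpos : ∀ i : ℤ, i > 0 → I.ExactAt i)
    (h : I ⟶ J) (hh0 : ι ≫ h.f 0 = 0) :
    Nonempty (Homotopy h 0) := by
  set S : ∀ i j : ℤ, I.X i ⟶ J.X j := fun i j => nseq I J h (i.toNat) i j with hS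
  refine ⟨⟨S, ?_, ?_⟩⟩
  · intro i j hni
    rw [ComplexShape.up_Rel] at hni
    exact (nseq_good I J ι hJinj hIzero hIex0 hIpos h hh0 (i.toNat)).2.1 i j hni
  · intro i
    rw [dNext_eq S (show (ComplexShape.up ℤ).Rel i (i+1) by simp),
      prevD_eq S (show (ComplexShape.up ℤ).Rel (i-1) i by simp)]
    have hK : i < (((i+1).toNat : ℕ) : ℤ) := by
      have := Int.self_le_toNat (i+1); omega
    have hg := (nseq_good I J ι hJinj hIzero hIex0 hIpos h hh0 ((i+1).toNat)).2.2 i hK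
    unfold nrel at hg
    have h2 : nseq I J h ((i+1).toNat) i = nseq I J h (i.toNat) i :=
      nseq_stab I J h i (i.toNat) ((i+1).toNat) le_rfl (by apply Int.toNat_le_toNat; omega)
    rw [h2] at hg
    show h.f i = I.d i (i+1) ≫ nseq I J h ((i+1).toNat) (i+1) i
        + nseq I J h (i.toNat) i (i-1) ≫ J.d (i-1) i + (0 : I ⟶ J).f i
    simpa using hg

end nullh

end MCIRAux

/-- If `U` is a minimal complete injective resolution of `M` and `V` is any
other complete injective resolution of `M`, then `U` is a direct summand of `V` with
contractible complementary summand. -/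

theorem minimal_cir_summand (R : Type u) [CommRing R] (M : ModuleCat.{u} R)
    (I U : CochainComplex (ModuleCat.{u} R) ℤ) (ι : M ⟶ I.X 0) (ν : I ⟶ U)
    (hU : IsCompleteInjRes R M I U ι ν) (hImin : IsMinimalCpx R I) (hUmin : IsMinimalCpx R U)
    (J V : CochainComplex (ModuleCat.{u} R) ℤ) (ι' : M ⟶ J.X 0) (ν' : J ⟶ V)
    (hV : IsCompleteInjRes R M J V ι' ν') :
    ∃ W : CochainComplex (ModuleCat.{u} R) ℤ,
      ContractibleCpx R W ∧ Nonempty (V ≅ U ⊞ W) := by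
  classical
  obtain ⟨n₁, hn₁⟩ := hU.iso_ge
  obtain ⟨n₂, hn₂⟩ := hV.iso_ge
  set N := max n₁ n₂ with hNdef
  have hNU : ∀ i : ℤ, N ≤ i → IsIso (ν.f i) := fun i hi => hn₁ i (le_trans (le_max_left _ _) hi)
  have hNV : ∀ i : ℤ, N ≤ i → IsIso (ν'.f i) := fun i hi => hn₂ i (le_trans (le_max_right _ _) hi)
  -- comparison maps between the injective resolutions, lifting `𝟙 M`
  obtain ⟨α, hα⟩ := MCIRAux.comparison I J ι ι' hV.res.inj hU.res.zero_neg hU.res.mono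
    hU.res.exact_zero hV.res.exact_zero hU.res.exact_pos
  obtain ⟨β, hβ⟩ := MCIRAux.comparison J I ι' ι hU.res.inj hV.res.zero_neg hV.res.mono
    hV.res.exact_zero hU.res.exact_zero hV.res.exact_pos
  -- chosen inverses of ν, ν' in degrees ≥ N
  obtain ⟨wU, hwU⟩ : ∃ w : ∀ i : ℤ, U.X i ⟶ I.X i, ∀ i : ℤ, N ≤ i →
      (ν.f i ≫ w i = 𝟙 (I.X i) ∧ w i ≫ ν.f i = 𝟙 (U.X i)) :=
    ⟨fun i => if hi : N ≤ i then (hNU i hi).out.choose else 0,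
      fun i hi => by simp only [dif_pos hi]; exact (hNU i hi).out.choose_spec⟩
  obtain ⟨wV, hwV⟩ : ∃ w : ∀ i : ℤ, V.X i ⟶ J.X i, ∀ i : ℤ, N ≤ i →
      (ν'.f i ≫ w i = 𝟙 (J.X i) ∧ w i ≫ ν'.f i = 𝟙 (V.X i)) :=
    ⟨fun i => if hi : N ≤ i then (hNV i hi).out.choose else 0,
      fun i hi => by simp only [dif_pos hi]; exact (hNV i hi).out.choose_spec⟩
  have hwUd : ∀ i : ℤ, N ≤ i → wU i ≫ I.d i (i+1) = U.d i (i+1) ≫ wU (i+1) := by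
    intro i hi
    have e := (hwU (i+1) (by omega)).1
    calc wU i ≫ I.d i (i+1)
        = wU i ≫ (I.d i (i+1) ≫ ν.f (i+1)) ≫ wU (i+1) := by
          simp only [Category.assoc]
          rw [e, Category.comp_id]
      _ = wU i ≫ (ν.f i ≫ U.d i (i+1)) ≫ wU (i+1) := by rw [← ν.comm i (i+1)]
      _ = U.d i (i+1) ≫ wU (i+1) := by
          simp only [← Category.assoc]
          rw [(hwU i hi).2, Category.id_comp]
  have hwVd : ∀ i : ℤ, N ≤ i → wV i ≫ J.d i (i+1) = V.d i (i+1) ≫ wV (i+1) := by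
    intro i hi
    have e := (hwV (i+1) (by omega)).1
    calc wV i ≫ J.d i (i+1)
        = wV i ≫ (J.d i (i+1) ≫ ν'.f (i+1)) ≫ wV (i+1) := by
          simp only [Category.assoc]
          rw [e, Category.comp_id]
      _ = wV i ≫ (ν'.f i ≫ V.d i (i+1)) ≫ wV (i+1) := by rw [← ν'.comm i (i+1)]
      _ = V.d i (i+1) ≫ wV (i+1) := by
          simp only [← Category.assoc]
          rw [(hwV i hi).2, Category.id_comp]
  -- the comparison chain maps between the complete resolutions
  obtain ⟨f, hf⟩ := MCIRAux.chainmap_extend U V N hV.totAcyclic.hom_acyclic hU.totAcyclic.inj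
    (fun i => wU i ≫ α.f i ≫ ν'.f i)
    (by
      intro i j hij hi
      subst hij
      unfold MCIRAux.msq
      show (wU i ≫ α.f i ≫ ν'.f i) ≫ V.d i (i+1)
          = U.d i (i+1) ≫ wU (i+1) ≫ α.f (i+1) ≫ ν'.f (i+1)
      calc (wU i ≫ α.f i ≫ ν'.f i) ≫ V.d i (i+1)
          = wU i ≫ α.f i ≫ (ν'.f i ≫ V.d i (i+1)) := by simp only [Category.assoc]
        _ = wU i ≫ (α.f i ≫ J.d i (i+1)) ≫ ν'.f (i+1) := by
            rw [ν'.comm i (i+1)]; simp only [Category.assoc]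
        _ = wU i ≫ (I.d i (i+1) ≫ α.f (i+1)) ≫ ν'.f (i+1) := by rw [α.comm i (i+1)]
        _ = (wU i ≫ I.d i (i+1)) ≫ α.f (i+1) ≫ ν'.f (i+1) := by simp only [Category.assoc]
        _ = U.d i (i+1) ≫ wU (i+1) ≫ α.f (i+1) ≫ ν'.f (i+1) := by
            rw [hwUd i hi]; simp only [Category.assoc])
  obtain ⟨g, hg⟩ := MCIRAux.chainmap_extend V U N hU.totAcyclic.hom_acyclic hV.totAcyclic.inj
    (fun i => wV i ≫ β.f i ≫ ν.f i)
    (by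
      intro i j hij hi
      subst hij
      unfold MCIRAux.msq
      show (wV i ≫ β.f i ≫ ν.f i) ≫ U.d i (i+1)
          = V.d i (i+1) ≫ wV (i+1) ≫ β.f (i+1) ≫ ν.f (i+1)
      calc (wV i ≫ β.f i ≫ ν.f i) ≫ U.d i (i+1)
          = wV i ≫ β.f i ≫ (ν.f i ≫ U.d i (i+1)) := by simp only [Category.assoc]
        _ = wV i ≫ (β.f i ≫ I.d i (i+1)) ≫ ν.f (i+1) := by
            rw [ν.comm i (i+1)]; simp only [Category.assoc]
        _ = wV i ≫ (J.d i (i+1) ≫ β.f (i+1)) ≫ ν.f (i+1) := by rw [β.comm i (i+1)]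
        _ = (wV i ≫ J.d i (i+1)) ≫ β.f (i+1) ≫ ν.f (i+1) := by simp only [Category.assoc]
        _ = V.d i (i+1) ≫ wV (i+1) ≫ β.f (i+1) ≫ ν.f (i+1) := by
            rw [hwVd i hi]; simp only [Category.assoc])
  have hfc : ∀ i : ℤ, N ≤ i → f.f i = wU i ≫ α.f i ≫ ν'.f i := fun i hi => hf i hi
  have hgc : ∀ i : ℤ, N ≤ i → g.f i = wV i ≫ β.f i ≫ ν.f i := fun i hi => hg i hi
  -- homotopy `f ≫ g ≃ 𝟙 U`
  have hγ0 : ι ≫ (α ≫ β).f 0 = ι := by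
    rw [HomologicalComplex.comp_f, ← Category.assoc, hα, hβ]
  have hsub0 : ι ≫ ((α ≫ β) - 𝟙 I).f 0 = 0 := by
    rw [HomologicalComplex.sub_f_apply, Preadditive.comp_sub, hγ0, HomologicalComplex.id_f,
      Category.comp_id, sub_self]
  obtain ⟨T⟩ := MCIRAux.nullhomotopy I I ι hU.res.inj hU.res.zero_neg hU.res.exact_zero
    hU.res.exact_pos ((α ≫ β) - 𝟙 I) hsub0
  have hrelU : ∀ i : ℤ, N + 1 ≤ i →
      MCIRAux.hrel U U (f ≫ g - 𝟙 U) (fun i j => wU i ≫ T.hom i j ≫ ν.f j) i := by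
    intro i hi
    unfold MCIRAux.hrel
    have hcomp : (f ≫ g - 𝟙 U).f i = wU i ≫ ((α ≫ β) - 𝟙 I).f i ≫ ν.f i := by
      rw [HomologicalComplex.sub_f_apply, HomologicalComplex.comp_f, hfc i (by omega),
        hgc i (by omega), HomologicalComplex.sub_f_apply, HomologicalComplex.comp_f,
        HomologicalComplex.id_f, HomologicalComplex.id_f, Preadditive.sub_comp,
        Preadditive.comp_sub]
      congr 1
      · calc (wU i ≫ α.f i ≫ ν'.f i) ≫ wV i ≫ β.f i ≫ ν.f i
            = wU i ≫ α.f i ≫ (ν'.f i ≫ wV i) ≫ β.f i ≫ ν.f i := by simp only [Category.assoc]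
          _ = wU i ≫ (α.f i ≫ β.f i) ≫ ν.f i := by
              rw [(hwV i (by omega)).1]
              simp only [Category.id_comp, Category.assoc]
      · rw [Category.id_comp]
        exact ((hwU i (by omega)).2).symm
    have hTc := T.comm i
    rw [dNext_eq T.hom (show (ComplexShape.up ℤ).Rel i (i+1) by simp),
      prevD_eq T.hom (show (ComplexShape.up ℤ).Rel (i-1) i by simp)] at hTc
    rw [HomologicalComplex.zero_f_apply, add_zero] at hTc
    rw [hcomp, hTc, Preadditive.add_comp, Preadditive.comp_add]
    congr 1
    · calc wU i ≫ (I.d i (i+1) ≫ T.hom (i+1) i) ≫ ν.f i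
          = (wU i ≫ I.d i (i+1)) ≫ T.hom (i+1) i ≫ ν.f i := by simp only [Category.assoc]
        _ = U.d i (i+1) ≫ wU (i+1) ≫ T.hom (i+1) i ≫ ν.f i := by
            rw [hwUd i (by omega)]; simp only [Category.assoc]
    · calc wU i ≫ (T.hom i (i-1) ≫ I.d (i-1) i) ≫ ν.f i
          = wU i ≫ T.hom i (i-1) ≫ (I.d (i-1) i ≫ ν.f i) := by simp only [Category.assoc]
        _ = wU i ≫ T.hom i (i-1) ≫ (ν.f (i-1) ≫ U.d (i-1) i) := by rw [ν.comm (i-1) i]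
        _ = (wU i ≫ T.hom i (i-1) ≫ ν.f (i-1)) ≫ U.d (i-1) i := by simp only [Category.assoc]
  obtain ⟨HU0⟩ := MCIRAux.homotopy_extend U U (f ≫ g - 𝟙 U) (N+1) hU.totAcyclic.hom_acyclic
    hU.totAcyclic.inj (fun i j => wU i ≫ T.hom i j ≫ ν.f j) hrelU
  have H_U : Homotopy (f ≫ g) (𝟙 U) := Homotopy.equivSubZero.symm HU0
  -- homotopy `g ≫ f ≃ 𝟙 V`
  have hγ0' : ι' ≫ (β ≫ α).f 0 = ι' := by
    rw [HomologicalComplex.comp_f, ← Category.assoc, hβ, hα]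
  have hsub0' : ι' ≫ ((β ≫ α) - 𝟙 J).f 0 = 0 := by
    rw [HomologicalComplex.sub_f_apply, Preadditive.comp_sub, hγ0', HomologicalComplex.id_f,
      Category.comp_id, sub_self]
  obtain ⟨T'⟩ := MCIRAux.nullhomotopy J J ι' hV.res.inj hV.res.zero_neg hV.res.exact_zero
    hV.res.exact_pos ((β ≫ α) - 𝟙 J) hsub0'
  have hrelV : ∀ i : ℤ, N + 1 ≤ i →
      MCIRAux.hrel V V (g ≫ f - 𝟙 V) (fun i j => wV i ≫ T'.hom i j ≫ ν'.f j) i := by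
    intro i hi
    unfold MCIRAux.hrel
    have hcomp : (g ≫ f - 𝟙 V).f i = wV i ≫ ((β ≫ α) - 𝟙 J).f i ≫ ν'.f i := by
      rw [HomologicalComplex.sub_f_apply, HomologicalComplex.comp_f, hgc i (by omega),
        hfc i (by omega), HomologicalComplex.sub_f_apply, HomologicalComplex.comp_f,
        HomologicalComplex.id_f, HomologicalComplex.id_f, Preadditive.sub_comp,
        Preadditive.comp_sub]
      congr 1
      · calc (wV i ≫ β.f i ≫ ν.f i) ≫ wU i ≫ α.f i ≫ ν'.f i
            = wV i ≫ β.f i ≫ (ν.f i ≫ wU i) ≫ α.f i ≫ ν'.f i := by simp only [Category.assoc]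
          _ = wV i ≫ (β.f i ≫ α.f i) ≫ ν'.f i := by
              rw [(hwU i (by omega)).1]
              simp only [Category.id_comp, Category.assoc]
      · rw [Category.id_comp]
        exact ((hwV i (by omega)).2).symm
    have hTc := T'.comm i
    rw [dNext_eq T'.hom (show (ComplexShape.up ℤ).Rel i (i+1) by simp),
      prevD_eq T'.hom (show (ComplexShape.up ℤ).Rel (i-1) i by simp)] at hTc
    rw [HomologicalComplex.zero_f_apply, add_zero] at hTc
    rw [hcomp, hTc, Preadditive.add_comp, Preadditive.comp_add]
    congr 1
    · calc wV i ≫ (J.d i (i+1) ≫ T'.hom (i+1) i) ≫ ν'.f i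
          = (wV i ≫ J.d i (i+1)) ≫ T'.hom (i+1) i ≫ ν'.f i := by simp only [Category.assoc]
        _ = V.d i (i+1) ≫ wV (i+1) ≫ T'.hom (i+1) i ≫ ν'.f i := by
            rw [hwVd i (by omega)]; simp only [Category.assoc]
    · calc wV i ≫ (T'.hom i (i-1) ≫ J.d (i-1) i) ≫ ν'.f i
          = wV i ≫ T'.hom i (i-1) ≫ (J.d (i-1) i ≫ ν'.f i) := by simp only [Category.assoc]
        _ = wV i ≫ T'.hom i (i-1) ≫ (ν'.f (i-1) ≫ V.d (i-1) i) := by rw [ν'.comm (i-1) i]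
        _ = (wV i ≫ T'.hom i (i-1) ≫ ν'.f (i-1)) ≫ V.d (i-1) i := by simp only [Category.assoc]
  obtain ⟨HV0⟩ := MCIRAux.homotopy_extend V V (g ≫ f - 𝟙 V) (N+1) hV.totAcyclic.hom_acyclic
    hV.totAcyclic.inj (fun i j => wV i ≫ T'.hom i j ≫ ν'.f j) hrelV
  have H_V : Homotopy (g ≫ f) (𝟙 V) := Homotopy.equivSubZero.symm HV0
  -- minimality of U: `f ≫ g` is an isomorphism
  have hiso : IsIso (f ≫ g) := by
    have := hUmin
      { hom := f ≫ g
        inv := 𝟙 U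
        homotopyHomInvId := (Homotopy.ofEq (Category.comp_id _)).trans H_U
        homotopyInvHomId := (Homotopy.ofEq (Category.id_comp _)).trans H_U }
    exact this
  haveI := hiso
  set p : U ⟶ U := CategoryTheory.inv (f ≫ g) with hpdef
  set g' : V ⟶ U := g ≫ p with hg'def
  have hfg' : f ≫ g' = 𝟙 U := by
    rw [hg'def, ← Category.assoc, hpdef, IsIso.hom_inv_id]
  -- homotopy `g' ≫ f ≃ 𝟙 V`
  have hA2 : Homotopy (𝟙 U) p :=
    ((Homotopy.ofEq (IsIso.hom_inv_id (f ≫ g)).symm).trans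
      (H_U.compRight p)).trans (Homotopy.ofEq (Category.id_comp p))
  have hA3 : Homotopy (g' ≫ f) (𝟙 V) := by
    refine (Homotopy.ofEq ?_).trans ((((hA2.symm.compRight f).compLeft g).trans
      (Homotopy.ofEq ?_)).trans H_V)
    · rw [hg'def]; simp only [Category.assoc]
    · rw [Category.id_comp]
  -- the splitting
  have hqcond : (𝟙 V - g' ≫ f) ≫ g' = 0 := by
    rw [Preadditive.sub_comp, Category.id_comp, Category.assoc, hfg', Category.comp_id, sub_self]
  set W : CochainComplex (ModuleCat.{u} R) ℤ := kernel g' with hWdef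
  set q : V ⟶ W := kernel.lift g' (𝟙 V - g' ≫ f) hqcond with hqdef
  have hqι : q ≫ kernel.ι g' = 𝟙 V - g' ≫ f := kernel.lift_ι _ _ _
  have hfq : f ≫ q = 0 := by
    rw [← cancel_mono (kernel.ι g'), Category.assoc, hqι, zero_comp,
      Preadditive.comp_sub, Category.comp_id, ← Category.assoc, hfg', Category.id_comp, sub_self]
  have hιq : kernel.ι g' ≫ q = 𝟙 W := by
    rw [← cancel_mono (kernel.ι g'), Category.assoc, hqι, Category.id_comp,
      Preadditive.comp_sub, Category.comp_id, ← Category.assoc, kernel.condition, zero_comp,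
      sub_zero]
  refine ⟨W, ?_, ⟨?_⟩⟩
  · -- contractibility of W
    have K : Homotopy ((kernel.ι g' ≫ 𝟙 V) ≫ q) ((kernel.ι g' ≫ (g' ≫ f)) ≫ q) :=
      (hA3.symm.compLeft (kernel.ι g')).compRight q
    have e1 : (kernel.ι g' ≫ 𝟙 V) ≫ q = 𝟙 W := by rw [Category.comp_id, hιq]
    have e2 : (kernel.ι g' ≫ (g' ≫ f)) ≫ q = 0 := by
      simp only [← Category.assoc, kernel.condition, zero_comp]
    exact ⟨(Homotopy.ofEq e1.symm).trans (K.trans (Homotopy.ofEq e2))⟩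
  · -- the isomorphism V ≅ U ⊞ W
    refine ⟨biprod.lift g' q, biprod.desc f (kernel.ι g'), ?_, ?_⟩
    · rw [biprod.lift_desc, hqι]
      abel
    · apply biprod.hom_ext'
      · rw [← Category.assoc, biprod.inl_desc, Category.comp_id]
        apply biprod.hom_ext
        · rw [Category.assoc, biprod.lift_fst, hfg', biprod.inl_fst]
        · rw [Category.assoc, biprod.lift_snd, hfq, biprod.inl_snd]
      · rw [← Category.assoc, biprod.inr_desc, Category.comp_id]
        apply biprod.hom_ext
        · rw [Category.assoc, biprod.lift_fst, kernel.condition, biprod.inr_fst]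
        · rw [Category.assoc, biprod.lift_snd, hιq, biprod.inr_snd]
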